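/- Let D and E be real M×N matrices with M ≥ 1, let the columns of D be linearly independent (v ↦ D·v injective), set D⁺ = (DᵀD)⁻¹·Dᵀ, let F, u ∈ ℝ^M, û ∈ ℝ^N, and let u_h ∈ ℝ^N minimize v ↦ ‖D·v − F‖₂. Suppose there exist nonnegative constants C_D, C_E, S and h > 0 and an integer p ≥ 1 such that the consistency bound ‖F − D·û‖₂ ≤ C_D·h^{p−1}·S and the interpolation bound ‖u − E·û‖_∞ ≤ C_E·h^{p+1}·S hold. Then the error satisfies ‖u − E·u_h‖_{ℓ2} ≤ (1/√M)·‖E‖₂·‖D⁺‖₂·C_D·h^{p−1}·S + C_E·h^{p+1}·S. -/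

import Mathlib

open Matrix Finset

/-- The operator (spectral) norm of a real rectangular matrix, induced by the
Euclidean vector norms: `‖A‖₂ = sup_{x ≠ 0} ‖A·x‖₂ / ‖x‖₂`. -/
noncomputable def opSpectralNorm {M N : ℕ} (A : Matrix (Fin M) (Fin N) ℝ) : ℝ :=
  ‖(Matrix.toEuclideanLin A).toContinuousLinearMap‖

lemma enorm_eq {k : ℕ} (x : Fin k → ℝ) :
    ‖(WithLp.equiv 2 (Fin k → ℝ)).symm x‖ = Real.sqrt (∑ i, x i ^ 2) := by
  rw [EuclideanSpace.norm_eq]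
  congr 1
  refine Finset.sum_congr rfl fun i _ => ?_
  simp [Real.norm_eq_abs, sq_abs]

lemma mulVec_norm_le {k l : ℕ} (A : Matrix (Fin k) (Fin l) ℝ) (x : Fin l → ℝ) :
    Real.sqrt (∑ i, (A.mulVec x) i ^ 2) ≤ opSpectralNorm A * Real.sqrt (∑ i, x i ^ 2) := by
  rw [← enorm_eq, ← enorm_eq]
  have := (Matrix.toEuclideanLin A).toContinuousLinearMap.le_opNorm
    ((WithLp.equiv 2 (Fin l → ℝ)).symm x)
  simpa [opSpectralNorm, Matrix.toEuclideanLin_apply] using this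

lemma quad_zero (a b : ℝ) (hb : 0 ≤ b) (key : ∀ t : ℝ, 0 ≤ 2 * t * a + t ^ 2 * b) : a = 0 := by
  by_contra ha
  have h1 : 0 < b + 1 := by linarith
  have hk := key (-a / (b + 1))
  have ha2 : 0 < a ^ 2 := by positivity
  have expand : 2 * (-a / (b+1)) * a + (-a / (b+1))^2 * b
      = (-(a^2) * (b + 2)) / (b+1)^2 := by field_simp; ring
  rw [expand] at hk
  have hneg : (-(a^2) * (b + 2)) / (b+1)^2 < 0 := by
    apply div_neg_of_neg_of_pos
    · nlinarith
    · positivity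
  linarith

lemma normal_equations {M N : ℕ} (D : Matrix (Fin M) (Fin N) ℝ) (F : Fin M → ℝ)
    (uh : Fin N → ℝ)
    (hmin : ∀ v : Fin N → ℝ,
      Real.sqrt (∑ i, (D.mulVec uh - F) i ^ 2) ≤
        Real.sqrt (∑ i, (D.mulVec v - F) i ^ 2)) :
    Dᵀ.mulVec (D.mulVec uh - F) = 0 := by
  funext j
  have hb0 : (0:ℝ) ≤ ∑ i, (D i j) ^ 2 := Finset.sum_nonneg fun i _ => sq_nonneg _
  have key : ∀ t : ℝ, 0 ≤ 2 * t * (∑ i, (D.mulVec uh - F) i * D i j)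
      + t ^ 2 * (∑ i, (D i j) ^ 2) := by
    intro t
    have hmv : ∀ i, (D.mulVec (uh + Pi.single j t) - F) i
        = (D.mulVec uh - F) i + t * D i j := by
      intro i
      simp only [Matrix.mulVec_add, Matrix.mulVec_single, Pi.sub_apply, Pi.add_apply, Pi.smul_apply, op_smul_eq_mul, Matrix.col_apply]
      ring
    have h2 : (0:ℝ) ≤ ∑ i, (D.mulVec uh - F) i ^ 2 :=
      Finset.sum_nonneg fun i _ => sq_nonneg _
    have h3 : (0:ℝ) ≤ ∑ i, ((D.mulVec uh - F) i + t * D i j) ^ 2 :=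
      Finset.sum_nonneg fun i _ => sq_nonneg _
    have h1' : Real.sqrt (∑ i, (D.mulVec uh - F) i ^ 2)
        ≤ Real.sqrt (∑ i, ((D.mulVec uh - F) i + t * D i j) ^ 2) := by
      have e : (∑ i, (D.mulVec (uh + Pi.single j t) - F) i ^ 2)
          = ∑ i, ((D.mulVec uh - F) i + t * D i j) ^ 2 :=
        Finset.sum_congr rfl fun i _ => by rw [hmv i]
      have := hmin (uh + Pi.single j t)
      rwa [e] at this
    have hsum : ∑ i, (D.mulVec uh - F) i ^ 2
        ≤ ∑ i, ((D.mulVec uh - F) i + t * D i j) ^ 2 := by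
      calc ∑ i, (D.mulVec uh - F) i ^ 2
          = Real.sqrt (∑ i, (D.mulVec uh - F) i ^ 2) ^ 2 := (Real.sq_sqrt h2).symm
        _ ≤ Real.sqrt (∑ i, ((D.mulVec uh - F) i + t * D i j) ^ 2) ^ 2 :=
            pow_le_pow_left₀ (Real.sqrt_nonneg _) h1' 2
        _ = ∑ i, ((D.mulVec uh - F) i + t * D i j) ^ 2 := Real.sq_sqrt h3
    have expand : ∑ i, ((D.mulVec uh - F) i + t * D i j) ^ 2
        = (∑ i, (D.mulVec uh - F) i ^ 2)
          + (2 * t * (∑ i, (D.mulVec uh - F) i * D i j) + t ^ 2 * (∑ i, (D i j) ^ 2)) := by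
      have hc : ∀ i ∈ Finset.univ, ((D.mulVec uh - F) i + t * D i j) ^ 2
          = (D.mulVec uh - F) i ^ 2
            + (2 * t * ((D.mulVec uh - F) i * D i j) + t ^ 2 * (D i j) ^ 2) :=
        fun i _ => by ring
      rw [Finset.sum_congr rfl hc, Finset.sum_add_distrib, Finset.sum_add_distrib,
        ← Finset.mul_sum, ← Finset.mul_sum]
    linarith [hsum, expand]
  have ha0 : (∑ i, (D.mulVec uh - F) i * D i j) = 0 := quad_zero _ _ hb0 key
  have heq : Dᵀ.mulVec (D.mulVec uh - F) j = ∑ i, (D.mulVec uh - F) i * D i j := by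
    simp only [Matrix.mulVec, dotProduct, Matrix.transpose_apply]
    exact Finset.sum_congr rfl fun i _ => mul_comm _ _
  simp only [Pi.zero_apply, heq, ha0]

/-- **The final PDE error estimate.**
If the columns of `D` are independent, `D⁺ = (DᵀD)⁻¹·Dᵀ`, `u_h` minimizes
`v ↦ ‖D·v − F‖₂`, and the consistency bound `‖F − D·û‖₂ ≤ C_D·h^(p−1)·S` and
interpolation bound `‖u − E·û‖_∞ ≤ C_E·h^(p+1)·S` hold, then
`‖u − E·u_h‖_{ℓ2} ≤ (1/√M)·‖E‖₂·‖D⁺‖₂·C_D·h^(p−1)·S + C_E·h^(p+1)·S`. -/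
theorem lsq_pde_error_estimate
    (M N : ℕ) (hM : 1 ≤ M) (D E : Matrix (Fin M) (Fin N) ℝ)
    (F u : Fin M → ℝ) (uhat : Fin N → ℝ) (uh : Fin N → ℝ)
    (hinj : Function.Injective D.mulVec)
    (hmin : ∀ v : Fin N → ℝ,
      Real.sqrt (∑ i, (D.mulVec uh - F) i ^ 2) ≤
        Real.sqrt (∑ i, (D.mulVec v - F) i ^ 2))
    (CD CE S : ℝ) (hCD : 0 ≤ CD) (hCE : 0 ≤ CE) (hS : 0 ≤ S)
    (h : ℝ) (hh : 0 < h) (p : ℕ) (hp : 1 ≤ p)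
    (hconsistency :
      Real.sqrt (∑ i, (F - D.mulVec uhat) i ^ 2) ≤ CD * h ^ (p - 1) * S)
    (hinterp : ∀ i, |u i - E.mulVec uhat i| ≤ CE * h ^ (p + 1) * S) :
    (1 / Real.sqrt M) * Real.sqrt (∑ i, (u i - E.mulVec uh i) ^ 2) ≤
      (1 / Real.sqrt M) * opSpectralNorm E * opSpectralNorm ((Dᵀ * D)⁻¹ * Dᵀ) *
        (CD * h ^ (p - 1) * S) + CE * h ^ (p + 1) * S := by
  have hNE := normal_equations D F uh hmin
  -- injectivity of DᵀD, hence invertibility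
  have hinjG : Function.Injective (Dᵀ * D).mulVec := by
    intro x y hxy
    have hz : (Dᵀ * D).mulVec (x - y) = 0 := by
      rw [Matrix.mulVec_sub, hxy, sub_self]
    have h0 : (D.mulVec (x - y)) ⬝ᵥ (D.mulVec (x - y)) = 0 := by
      have hdp : (x - y) ⬝ᵥ ((Dᵀ * D).mulVec (x - y)) = 0 := by
        rw [hz, dotProduct_zero]
      rw [← Matrix.mulVec_mulVec, Matrix.dotProduct_mulVec, Matrix.vecMul_transpose] at hdp
      exact hdp
    have hD0 : D.mulVec (x - y) = 0 := dotProduct_self_eq_zero.mp h0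
    have : D.mulVec x = D.mulVec y := by
      rw [Matrix.mulVec_sub] at hD0
      exact sub_eq_zero.mp hD0
    exact hinj this
  have hdet : IsUnit (Dᵀ * D).det := by
    rw [← Matrix.isUnit_iff_isUnit_det]
    exact Matrix.mulVec_injective_iff_isUnit.mp hinjG
  have hinvmul : (Dᵀ * D)⁻¹ * (Dᵀ * D) = 1 := Matrix.nonsing_inv_mul _ hdet
  -- the key identity: uhat - uh = D⁺ (D uhat - F)
  have h1 : Dᵀ.mulVec (D.mulVec uhat - F) = (Dᵀ * D).mulVec (uhat - uh) := by
    have hsplit : D.mulVec uhat - F = D.mulVec (uhat - uh) + (D.mulVec uh - F) := by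
      funext i
      simp only [Matrix.mulVec_sub, Pi.sub_apply, Pi.add_apply]
      ring
    rw [hsplit, Matrix.mulVec_add, hNE, add_zero, Matrix.mulVec_mulVec]
  have hid : uhat - uh = ((Dᵀ * D)⁻¹ * Dᵀ).mulVec (D.mulVec uhat - F) := by
    calc uhat - uh = (1 : Matrix (Fin N) (Fin N) ℝ).mulVec (uhat - uh) :=
          (Matrix.one_mulVec _).symm
      _ = ((Dᵀ * D)⁻¹ * (Dᵀ * D)).mulVec (uhat - uh) := by rw [hinvmul]
      _ = (Dᵀ * D)⁻¹.mulVec ((Dᵀ * D).mulVec (uhat - uh)) := (Matrix.mulVec_mulVec _ _ _).symm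
      _ = (Dᵀ * D)⁻¹.mulVec (Dᵀ.mulVec (D.mulVec uhat - F)) := by rw [h1]
      _ = ((Dᵀ * D)⁻¹ * Dᵀ).mulVec (D.mulVec uhat - F) := Matrix.mulVec_mulVec _ _ _
  set K1 : ℝ := CD * h ^ (p - 1) * S with hK1def
  set K2 : ℝ := CE * h ^ (p + 1) * S with hK2def
  have hK1 : 0 ≤ K1 := by positivity
  have hK2 : 0 ≤ K2 := by positivity
  set spE : ℝ := opSpectralNorm E with hspE
  set spDp : ℝ := opSpectralNorm ((Dᵀ * D)⁻¹ * Dᵀ) with hspDp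
  have hspE0 : 0 ≤ spE := norm_nonneg _
  have hspDp0 : 0 ≤ spDp := norm_nonneg _
  -- bound on sqrt(∑ (uhat - uh)²)
  have hw : Real.sqrt (∑ i, (D.mulVec uhat - F) i ^ 2) ≤ K1 := by
    have : ∑ i, (D.mulVec uhat - F) i ^ 2 = ∑ i, (F - D.mulVec uhat) i ^ 2 :=
      Finset.sum_congr rfl fun i _ => by simp only [Pi.sub_apply]; ring
    rw [this]
    exact hconsistency
  have hdiff : Real.sqrt (∑ i, (uhat - uh) i ^ 2) ≤ spDp * K1 := by
    calc Real.sqrt (∑ i, (uhat - uh) i ^ 2)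
        = Real.sqrt (∑ i, (((Dᵀ * D)⁻¹ * Dᵀ).mulVec (D.mulVec uhat - F)) i ^ 2) := by
          rw [← hid]
      _ ≤ spDp * Real.sqrt (∑ i, (D.mulVec uhat - F) i ^ 2) := mulVec_norm_le _ _
      _ ≤ spDp * K1 := mul_le_mul_of_nonneg_left hw hspDp0
  have step5 : Real.sqrt (∑ i, (E.mulVec (uhat - uh)) i ^ 2) ≤ spE * (spDp * K1) := by
    calc Real.sqrt (∑ i, (E.mulVec (uhat - uh)) i ^ 2)
        ≤ spE * Real.sqrt (∑ i, (uhat - uh) i ^ 2) := mulVec_norm_le _ _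
      _ ≤ spE * (spDp * K1) := mul_le_mul_of_nonneg_left hdiff hspE0
  have step6 : Real.sqrt (∑ i, (u i - E.mulVec uhat i) ^ 2) ≤ Real.sqrt M * K2 := by
    have hb : ∑ i, (u i - E.mulVec uhat i) ^ 2 ≤ ∑ _i : Fin M, K2 ^ 2 := by
      refine Finset.sum_le_sum fun i _ => ?_
      have := hinterp i
      calc (u i - E.mulVec uhat i) ^ 2 = |u i - E.mulVec uhat i| ^ 2 := (sq_abs _).symm
        _ ≤ K2 ^ 2 := pow_le_pow_left₀ (abs_nonneg _) this 2
    calc Real.sqrt (∑ i, (u i - E.mulVec uhat i) ^ 2)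
        ≤ Real.sqrt (∑ _i : Fin M, K2 ^ 2) := Real.sqrt_le_sqrt hb
      _ = Real.sqrt ((M : ℝ) * K2 ^ 2) := by
          rw [Finset.sum_const, Finset.card_univ, Fintype.card_fin, nsmul_eq_mul]
      _ = Real.sqrt M * K2 := by
          rw [Real.sqrt_mul (Nat.cast_nonneg M), Real.sqrt_sq hK2]
  -- triangle inequality
  have hdec : (fun i => u i - E.mulVec uh i)
      = E.mulVec (uhat - uh) + fun i => u i - E.mulVec uhat i := by
    funext i
    simp only [Matrix.mulVec_sub, Pi.add_apply, Pi.sub_apply]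
    ring
  have tri : Real.sqrt (∑ i, (u i - E.mulVec uh i) ^ 2)
      ≤ Real.sqrt (∑ i, (E.mulVec (uhat - uh)) i ^ 2)
        + Real.sqrt (∑ i, (u i - E.mulVec uhat i) ^ 2) := by
    have e1 : Real.sqrt (∑ i, (u i - E.mulVec uh i) ^ 2)
        = ‖(WithLp.equiv 2 (Fin M → ℝ)).symm (fun i => u i - E.mulVec uh i)‖ :=
      (enorm_eq _).symm
    have e2 : Real.sqrt (∑ i, (E.mulVec (uhat - uh)) i ^ 2)
        = ‖(WithLp.equiv 2 (Fin M → ℝ)).symm (E.mulVec (uhat - uh))‖ := (enorm_eq _).symm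
    have e3 : Real.sqrt (∑ i, (u i - E.mulVec uhat i) ^ 2)
        = ‖(WithLp.equiv 2 (Fin M → ℝ)).symm (fun i => u i - E.mulVec uhat i)‖ :=
      (enorm_eq _).symm
    rw [e1, e2, e3, hdec, WithLp.equiv_symm_apply, WithLp.toLp_add]
    exact norm_add_le _ _
  -- combine
  have hM1 : (1 : ℝ) ≤ (M : ℝ) := by exact_mod_cast hM
  have hsM : 0 < Real.sqrt M := Real.sqrt_pos.mpr (by linarith)
  have hinvM : 0 ≤ 1 / Real.sqrt M := by positivity
  have hcancel : 1 / Real.sqrt M * Real.sqrt M = 1 := one_div_mul_cancel hsM.ne'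
  calc (1 / Real.sqrt M) * Real.sqrt (∑ i, (u i - E.mulVec uh i) ^ 2)
      ≤ (1 / Real.sqrt M) * (spE * (spDp * K1) + Real.sqrt M * K2) := by
        apply mul_le_mul_of_nonneg_left _ hinvM
        linarith [tri, step5, step6]
    _ = (1 / Real.sqrt M) * spE * spDp * K1 + (1 / Real.sqrt M * Real.sqrt M) * K2 := by
        ring
    _ = (1 / Real.sqrt M) * spE * spDp * K1 + K2 := by rw [hcancel, one_mul]
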